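/- arXiv:1006.4141 — 3 statements merged into one kernel-verified Lean document; each statement's English description precedes it below -/
import Mathlib

section
/- Let R be a Noetherian UFD, M a finitely generated torsion module over R[t^{±1}] admitting a square presentation matrix A (so its order Δ₀(M) = det A up to units). Let r ≥ 1 and regard M as an R[s^{±1}]-module with s = tʳ. Then the order of M as an R[s^{±1}]-module equals det(A)⁽ʳ⁾(s), i.e., if det A = c₀∏(t − ξⱼ) over the splitting field then the R[s^{±1}]-order is c₀ʳ∏(s − ξⱼʳ) up to units. -/
open Polynomial

/-- Over an algebraically closed field `K`, for `f(t) = c₀ ∏ (t - ξⱼ)`,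
`polyPowK r f` is `f⁽ʳ⁾(t) = c₀ʳ ∏ (t - ξⱼʳ)`. -/
noncomputable def polyPowK {K : Type*} [Field K] [IsAlgClosed K]
    (r : ℕ) (f : Polynomial K) : Polynomial K :=
  C (f.leadingCoeff ^ r) * (f.roots.map (fun ξ => X - C (ξ ^ r))).prod

/-- The matrix of multiplication by `t` on `R[t]`, regarded as a free module of
rank `r` over `R[s]` with `s = tʳ` and basis `1, t, …, t^{r-1}`: the variable
`X` of the entries plays the role of `s`. -/
noncomputable def tMat (R : Type*) [CommRing R] (r : ℕ) :
    Matrix (Fin r) (Fin r) (Polynomial R) :=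
  fun i j => if (i : ℕ) = (j : ℕ) + 1 then 1
    else if (i : ℕ) = 0 ∧ (j : ℕ) = r - 1 then X else 0

/-- Given a square presentation matrix `A` over `R[t]` of a module `M`, the
matrix over `R[s]` (with `s = tʳ`) presenting `M` as an `R[s]`-module:
each entry `A i j ∈ R[t]` is replaced by the `r × r` matrix of multiplication
by `A i j` on `R[t]` over `R[s]`. -/
noncomputable def restMat {R : Type*} [CommRing R] {n r : ℕ}
    (A : Matrix (Fin n) (Fin n) (Polynomial R)) :
    Matrix (Fin n × Fin r) (Fin n × Fin r) (Polynomial R) :=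
  fun p q => (Polynomial.aeval (tMat R r) (A p.1 q.1)) p.2 q.2

namespace StmtAux

open Matrix

section BlockHom

variable {F E : Type*} [CommRing F] [CommRing E] {n r : ℕ}

/-- The ring homomorphism on square matrices induced by a ring homomorphism
into `r × r` matrices, flattening the blocks. -/
noncomputable def blockHom (ρ : E →+* Matrix (Fin r) (Fin r) F) :
    Matrix (Fin n) (Fin n) E →+* Matrix (Fin n × Fin r) (Fin n × Fin r) F :=
  (Matrix.compRingEquiv (Fin n) (Fin r) F).toRingHom.comp ρ.mapMatrix

lemma blockHom_apply (ρ : E →+* Matrix (Fin r) (Fin r) F)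
    (M : Matrix (Fin n) (Fin n) E) (p q : Fin n × Fin r) :
    blockHom ρ M p q = ρ (M p.1 q.1) p.2 q.2 := rfl

lemma det_blockHom_transvection (ρ : E →+* Matrix (Fin r) (Fin r) F)
    (i j : Fin n) (hij : i ≠ j) (c : E) :
    (blockHom ρ (Matrix.transvection i j c)).det = 1 := by
  classical
  have hentry : ∀ x y : Fin n × Fin r,
      blockHom ρ (Matrix.transvection i j c) x y =
        (if x = y then 1 else 0) + (if x.1 = i ∧ y.1 = j then ρ c x.2 y.2 else 0) := by
    intro x y
    rw [blockHom_apply, Matrix.transvection, Matrix.add_apply, map_add, Matrix.add_apply,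
      Matrix.one_apply, Matrix.single]
    congr 1
    · by_cases h : x.1 = y.1 <;>
        simp [h, Matrix.one_apply, Prod.ext_iff, map_one (f := ρ), map_zero (f := ρ)]
    · by_cases h : i = x.1 ∧ j = y.1
      · simp [Matrix.of_apply, h.1.symm, h.2.symm]
      · have h' : ¬ (x.1 = i ∧ y.1 = j) := fun hc => h ⟨hc.1.symm, hc.2.symm⟩
        simp only [Matrix.of_apply, if_neg h, if_neg h', map_zero (f := ρ), Matrix.zero_apply]
  rw [Matrix.twoBlockTriangular_det _ (fun x => x.1 = i) ?hz]
  case hz =>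
    intro x hx y hy
    rw [hentry]
    have hxy : x ≠ y := fun h => hx (h ▸ hy)
    simp [hxy, hx]
  have hb1 : (Matrix.toSquareBlockProp (blockHom ρ (Matrix.transvection i j c))
      (fun x => x.1 = i)) = 1 := by
    ext x y
    rcases x with ⟨x, hx⟩; rcases y with ⟨y, hy⟩
    rw [Matrix.toSquareBlockProp, Matrix.toBlock_apply, hentry, Matrix.one_apply]
    have : ¬ (x.1 = i ∧ y.1 = j) := by
      rintro ⟨-, h2⟩; exact hij (hy ▸ h2.symm).symm
    simp [this, Subtype.ext_iff]
  have hb2 : (Matrix.toSquareBlockProp (blockHom ρ (Matrix.transvection i j c))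
      (fun x => ¬ x.1 = i)) = 1 := by
    ext x y
    rcases x with ⟨x, hx⟩; rcases y with ⟨y, hy⟩
    rw [Matrix.toSquareBlockProp, Matrix.toBlock_apply, hentry, Matrix.one_apply]
    have : ¬ (x.1 = i ∧ y.1 = j) := fun hc => hx hc.1
    simp [this, Subtype.ext_iff]
  rw [hb1, hb2]
  simp

lemma det_blockHom_diagonal (ρ : E →+* Matrix (Fin r) (Fin r) F) (d : Fin n → E) :
    (blockHom ρ (Matrix.diagonal d)).det = ∏ p, (ρ (d p)).det := by
  classical
  have hM : blockHom ρ (Matrix.diagonal d)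
      = (Matrix.blockDiagonal (fun p => ρ (d p))).submatrix
          (Equiv.prodComm (Fin n) (Fin r)) (Equiv.prodComm (Fin n) (Fin r)) := by
    ext x y
    rw [blockHom_apply, Matrix.submatrix_apply]
    rcases x with ⟨p, k⟩; rcases y with ⟨q, l⟩
    by_cases h : p = q
    · subst h
      simp [Matrix.diagonal_apply_eq, Matrix.blockDiagonal_apply, Equiv.prodComm]
    · simp [Matrix.diagonal_apply_ne _ h, Matrix.blockDiagonal_apply, Equiv.prodComm, h,
        map_zero (f := ρ)]
  rw [hM, Matrix.det_submatrix_equiv_self, Matrix.det_blockDiagonal]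

lemma det_ringHom_prod {ι : Type*} (ρ : E →+* Matrix (Fin r) (Fin r) F)
    (s : Finset ι) (f : ι → E) :
    (ρ (∏ p ∈ s, f p)).det = ∏ p ∈ s, (ρ (f p)).det := by
  classical
  induction s using Finset.cons_induction with
  | empty => simp
  | cons a s ha ih => rw [Finset.prod_cons, _root_.map_mul, Matrix.det_mul, ih, Finset.prod_cons]

theorem det_blockHom {E : Type*} [Field E] (ρ : E →+* Matrix (Fin r) (Fin r) F)
    (B : Matrix (Fin n) (Fin n) E) :
    (blockHom ρ B).det = (ρ B.det).det := by
  classical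
  obtain ⟨L, L', D, hB⟩ := Matrix.Pivot.exists_list_transvec_mul_diagonal_mul_list_transvec B
  have hlist : ∀ L : List (Matrix.TransvectionStruct (Fin n) E),
      (blockHom ρ (L.map Matrix.TransvectionStruct.toMatrix).prod).det = 1 := by
    intro L
    induction L with
    | nil => simp
    | cons t L ih =>
      rw [List.map_cons, List.prod_cons, _root_.map_mul, Matrix.det_mul, ih, mul_one]
      rcases t with ⟨ti, tj, htij, tc⟩
      exact det_blockHom_transvection ρ ti tj htij tc
  rw [hB, _root_.map_mul, _root_.map_mul, Matrix.det_mul, Matrix.det_mul, hlist, hlist,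
    det_blockHom_diagonal, one_mul, mul_one]
  rw [Matrix.det_mul, Matrix.det_mul, Matrix.TransvectionStruct.det_toMatrix_prod,
    Matrix.TransvectionStruct.det_toMatrix_prod, Matrix.det_diagonal, one_mul, mul_one,
    det_ringHom_prod]

end BlockHom


section Companion

variable {S : Type*} [CommRing S]

/-- Companion-type matrix: subdiagonal of `1`s, `v` in the upper-right corner,
`w` added on the diagonal. -/
noncomputable def cMat (S : Type*) [CommRing S] (r : ℕ) (v w : S) :
    Matrix (Fin r) (Fin r) S :=
  fun i j => (if (i : ℕ) = (j : ℕ) + 1 then 1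
    else if (i : ℕ) = 0 ∧ (j : ℕ) = r - 1 then v else 0) + (if i = j then w else 0)

lemma det_cMat {r : ℕ} (hr : 0 < r) (v w : S) :
    (cMat S r v w).det = w ^ r + (-1) ^ (r + 1) * v := by
  obtain ⟨m, rfl⟩ : ∃ m, r = m + 1 := ⟨r - 1, (Nat.succ_pred_eq_of_pos hr).symm⟩
  cases m with
  | zero =>
    rw [Matrix.det_fin_one]
    simp only [cMat, Fin.ext_iff, Fin.val_zero]
    norm_num
    ring
  | succ m =>
    rw [Matrix.det_succ_row_zero, Fin.sum_univ_castSucc, Fin.sum_univ_succ]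
    have hsum0 : (∑ j : Fin m, (-1) ^ ((((j.succ).castSucc : Fin (m+2))) : ℕ) *
        cMat S (m + 1 + 1) v w 0 ((j.succ).castSucc) *
        ((cMat S (m + 1 + 1) v w).submatrix Fin.succ ((j.succ).castSucc).succAbove).det) = 0 := by
      apply Finset.sum_eq_zero
      intro j _
      have hmid : cMat S (m + 1 + 1) v w 0 ((j.succ).castSucc) = 0 := by
        have hj : (j : ℕ) < m := j.isLt
        simp only [cMat, Fin.ext_iff, Fin.val_zero, Fin.coe_castSucc, Fin.val_succ]
        split_ifs <;> first | ring1 | (exfalso; omega) | simp_all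
      rw [hmid, mul_zero, zero_mul]
    have hc00 : cMat S (m + 1 + 1) v w 0 ((0 : Fin (m+1)).castSucc) = w := by
      simp only [cMat, Fin.ext_iff, Fin.val_zero, Fin.coe_castSucc]
      split_ifs <;> first | ring1 | (exfalso; omega) | simp_all
    have hclast : cMat S (m + 1 + 1) v w 0 (Fin.last (m+1)) = v := by
      simp only [cMat, Fin.ext_iff, Fin.val_zero, Fin.val_last]
      split_ifs <;> first | ring1 | (exfalso; omega) | simp_all
    have hminor0 : ((cMat S (m + 1 + 1) v w).submatrix Fin.succ
        ((0 : Fin (m+1)).castSucc).succAbove).det = w ^ (m + 1) := by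
      have hcast : ((0 : Fin (m+1)).castSucc).succAbove = (Fin.succ : Fin (m+1) → Fin (m+2)) := by
        rw [Fin.castSucc_zero, Fin.succAbove_zero]
      rw [hcast]
      have hlt : ((cMat S (m + 1 + 1) v w).submatrix Fin.succ Fin.succ).BlockTriangular
          OrderDual.toDual := by
        intro a b hab
        have hab' : (a : ℕ) < (b : ℕ) := hab
        simp only [cMat, Matrix.submatrix_apply, Fin.ext_iff, Fin.val_succ]
        split_ifs <;> first | ring1 | (exfalso; omega) | simp_all
      rw [Matrix.det_of_lowerTriangular _ hlt]
      have hdiag : ∀ a : Fin (m+1),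
          ((cMat S (m + 1 + 1) v w).submatrix Fin.succ Fin.succ) a a = w := by
        intro a
        simp only [cMat, Matrix.submatrix_apply, Fin.ext_iff, Fin.val_succ]
        split_ifs <;> first | ring1 | (exfalso; omega) | simp_all
      rw [Finset.prod_congr rfl (fun a _ => hdiag a)]
      simp
    have hminorlast : ((cMat S (m + 1 + 1) v w).submatrix Fin.succ
        (Fin.last (m+1)).succAbove).det = 1 := by
      rw [Fin.succAbove_last]
      have hut : ((cMat S (m + 1 + 1) v w).submatrix Fin.succ Fin.castSucc).BlockTriangular
          id := by
        intro a b hab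
        have hab' : (b : ℕ) < (a : ℕ) := hab
        simp only [cMat, Matrix.submatrix_apply, Fin.ext_iff, Fin.val_succ, Fin.coe_castSucc]
        split_ifs <;> first | ring1 | (exfalso; omega) | simp_all
      rw [Matrix.det_of_upperTriangular hut]
      have hdiag : ∀ a : Fin (m+1),
          ((cMat S (m + 1 + 1) v w).submatrix Fin.succ Fin.castSucc) a a = 1 := by
        intro a
        simp only [cMat, Matrix.submatrix_apply, Fin.ext_iff, Fin.val_succ, Fin.coe_castSucc]
        split_ifs <;> first | ring1 | (exfalso; omega) | simp_all
      rw [Finset.prod_congr rfl (fun a _ => hdiag a)]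
      simp
    rw [hsum0, hc00, hclast, hminor0, hminorlast]
    simp only [Fin.castSucc_zero, Fin.val_zero, pow_zero, one_mul, Fin.val_last, mul_one,
      add_zero]
    ring

end Companion


section Scalar

lemma aeval_tMat_sub_C {k : Type*} [CommRing k] {r : ℕ} (ξ : k) :
    Polynomial.aeval (tMat k r) (X - C ξ) = cMat (Polynomial k) r X (-(C ξ)) := by
  ext a b
  rw [map_sub, aeval_X, aeval_C, Matrix.sub_apply, Matrix.algebraMap_matrix_apply]
  simp only [tMat, cMat, sub_eq_add_neg, apply_ite (Neg.neg (α := Polynomial k)), neg_zero,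
    Polynomial.algebraMap_eq]

lemma det_aeval_tMat_sub_C {k : Type*} [CommRing k] {r : ℕ} (hr : 0 < r) (ξ : k) :
    (Polynomial.aeval (tMat k r) (X - C ξ)).det
      = (-1) ^ (r + 1) * (X - C (ξ ^ r)) := by
  rw [aeval_tMat_sub_C, det_cMat hr, map_pow, neg_pow]
  ring

lemma det_aeval_multiset_prod {k : Type*} [CommRing k] {r : ℕ} {α : Type*}
    (T : Matrix (Fin r) (Fin r) (Polynomial k)) (m : Multiset α) (h : α → Polynomial k) :
    (Polynomial.aeval T ((m.map h).prod)).det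
      = (m.map fun a => (Polynomial.aeval T (h a)).det).prod := by
  induction m using Multiset.induction_on with
  | empty => simp
  | cons a s ih =>
    simp only [Multiset.map_cons, Multiset.prod_cons, _root_.map_mul, Matrix.det_mul, ih]

theorem det_aeval_tMat_eq {k : Type*} [Field k] [IsAlgClosed k] {r : ℕ} (hr : 0 < r)
    (g : Polynomial k) :
    (Polynomial.aeval (tMat k r) g).det
      = (-1) ^ ((r + 1) * Multiset.card g.roots) * polyPowK r g := by
  conv_lhs => rw [Splits.eq_prod_roots (IsAlgClosed.splits g)]
  rw [_root_.map_mul, Matrix.det_mul, aeval_C]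
  have hscalar : (algebraMap k (Matrix (Fin r) (Fin r) (Polynomial k)) g.leadingCoeff).det
      = C g.leadingCoeff ^ r := by
    have hdiag : algebraMap k (Matrix (Fin r) (Fin r) (Polynomial k)) g.leadingCoeff
        = Matrix.diagonal (fun _ => C g.leadingCoeff) := by
      ext a b
      rw [Matrix.algebraMap_matrix_apply]
      by_cases h : a = b <;> simp [h, Matrix.diagonal_apply, Polynomial.algebraMap_eq]
    rw [hdiag, Matrix.det_diagonal, Finset.prod_const, Finset.card_univ, Fintype.card_fin]
  rw [hscalar, det_aeval_multiset_prod (tMat k r) g.roots (fun a => X - C a)]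
  have hmc : (g.roots.map fun a => (Polynomial.aeval (tMat k r) (X - C a)).det)
      = g.roots.map (fun a => (-1 : Polynomial k) ^ (r + 1) * (X - C (a ^ r))) :=
    Multiset.map_congr rfl (fun a _ => det_aeval_tMat_sub_C hr a)
  rw [hmc, Multiset.prod_map_mul]
  have hconst : (g.roots.map fun _ => (-1 : Polynomial k) ^ (r + 1)).prod
      = (-1 : Polynomial k) ^ ((r + 1) * Multiset.card g.roots) := by
    rw [Multiset.map_const', Multiset.prod_replicate, ← pow_mul]
  rw [hconst]
  simp only [polyPowK, map_pow]
  ring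

end Scalar

section BaseChange

lemma tMat_map {R S : Type*} [CommRing R] [CommRing S] (φ : R →+* S) (r : ℕ) :
    (tMat R r).map (Polynomial.mapRingHom φ) = tMat S r := by
  ext a b
  simp only [Matrix.map_apply, tMat]
  split_ifs <;> simp

lemma aeval_tMat_map {R S : Type*} [CommRing R] [CommRing S] (φ : R →+* S) (r : ℕ)
    (f : Polynomial R) :
    (Polynomial.aeval (tMat R r) f).map (Polynomial.mapRingHom φ)
      = Polynomial.aeval (tMat S r) (f.map φ) := by
  have h : ((Polynomial.mapRingHom φ).mapMatrix.comp
      (Polynomial.aeval (tMat R r) :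
        Polynomial R →ₐ[R] Matrix (Fin r) (Fin r) (Polynomial R)).toRingHom)
      = ((Polynomial.aeval (tMat S r) :
        Polynomial S →ₐ[S] Matrix (Fin r) (Fin r) (Polynomial S)).toRingHom.comp
        (Polynomial.mapRingHom φ)) := by
    apply Polynomial.ringHom_ext
    · intro a
      ext i j
      simp only [RingHom.comp_apply, RingHom.mapMatrix_apply, AlgHom.toRingHom_eq_coe,
        RingHom.coe_coe, aeval_C, coe_mapRingHom, map_C, Matrix.map_apply,
        Matrix.algebraMap_matrix_apply]
      split_ifs <;> simp [Polynomial.algebraMap_eq]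
    · simp only [RingHom.comp_apply, RingHom.mapMatrix_apply, AlgHom.toRingHom_eq_coe,
        RingHom.coe_coe, aeval_X, coe_mapRingHom, map_X]
      exact tMat_map φ r
  have h2 := RingHom.congr_fun h f
  simpa using h2

lemma restMat_map {R S : Type*} [CommRing R] [CommRing S] (φ : R →+* S) {n r : ℕ}
    (A : Matrix (Fin n) (Fin n) (Polynomial R)) :
    (restMat (r := r) A).map (Polynomial.mapRingHom φ)
      = restMat (r := r) (A.map (Polynomial.mapRingHom φ)) := by
  ext p q
  simp only [restMat, Matrix.map_apply]
  have := congrFun (congrFun (aeval_tMat_map φ r (A p.1 q.1)) p.2) q.2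
  simp only [Matrix.map_apply] at this
  rw [this]
  simp

end BaseChange


section Key

variable {k : Type*} [Field k]

lemma q_irreducible (k : Type*) [Field k] {r : ℕ} (hr : 0 < r) :
    Irreducible (X ^ r - C (X : Polynomial k) : Polynomial (Polynomial k)) := by
  have hq_monic : (X ^ r - C (X : Polynomial k)).Monic := monic_X_pow_sub_C _ hr.ne'
  have hP : (Ideal.span {(X : Polynomial k)}).IsPrime :=
    (Ideal.span_singleton_prime Polynomial.X_ne_zero).mpr Polynomial.prime_X
  refine Polynomial.irreducible_of_eisenstein_criterion hP ?_ ?_ ?_ ?_ ?_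
  · rw [hq_monic.leadingCoeff]
    intro h
    rw [Ideal.mem_span_singleton] at h
    exact Polynomial.not_isUnit_X (isUnit_of_dvd_one h)
  · intro m hm
    rw [degree_X_pow_sub_C hr] at hm
    have hmr : m < r := by exact_mod_cast hm
    rw [coeff_sub, coeff_X_pow, coeff_C, Ideal.mem_span_singleton]
    rw [if_neg (by omega : ¬ m = r)]
    rw [zero_sub, dvd_neg]
    by_cases h0 : m = 0
    · rw [if_pos h0]
    · rw [if_neg h0]
      exact dvd_zero _
  · rw [degree_X_pow_sub_C hr]
    exact_mod_cast hr
  · intro hmem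
    rw [Ideal.span_singleton_pow, Ideal.mem_span_singleton] at hmem
    have h0 : (X ^ r - C (X : Polynomial k)).coeff 0 = - X := by
      rw [coeff_sub, coeff_X_pow, coeff_C, if_neg (by omega : ¬ (0:ℕ) = r), if_pos rfl,
        zero_sub]
    rw [h0, dvd_neg] at hmem
    have hle := Polynomial.natDegree_le_of_dvd hmem Polynomial.X_ne_zero
    rw [natDegree_pow, natDegree_X] at hle
    omega
  · exact hq_monic.isPrimitive

theorem det_restMat {n r : ℕ} (hr : 0 < r) (B : Matrix (Fin n) (Fin n) (Polynomial k)) :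
    (restMat (r := r) B).det = (Polynomial.aeval (tMat k r) B.det).det := by
  classical
  set F := FractionRing (Polynomial k) with hF
  set ι : Polynomial k →+* F := algebraMap (Polynomial k) F with hι
  have hq_monic : (X ^ r - C (X : Polynomial k)).Monic := monic_X_pow_sub_C _ hr.ne'
  have hp_irr : Irreducible ((X ^ r - C (X : Polynomial k)).map ι) :=
    (hq_monic.irreducible_iff_irreducible_map_fraction_map (K := F)).mp (q_irreducible k hr)
  set p : Polynomial F := (X ^ r - C (X : Polynomial k)).map ι with hp
  haveI : Fact (Irreducible p) := ⟨hp_irr⟩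
  have hp0 : p ≠ 0 := (hq_monic.map ι).ne_zero
  set pb := AdjoinRoot.powerBasis hp0 with hpb
  have hdim : pb.dim = r := by
    rw [hpb]
    show ((X ^ r - C (X : Polynomial k)).map ι).natDegree = r
    rw [Polynomial.map_sub, Polynomial.map_pow, map_X, map_C]
    exact natDegree_X_pow_sub_C
  set b : Module.Basis (Fin r) F (AdjoinRoot p) := pb.basis.reindex (finCongr hdim) with hb
  set ρ : AdjoinRoot p →+* Matrix (Fin r) (Fin r) F := (Algebra.leftMulMatrix b).toRingHom
    with hρ
  set θ : AdjoinRoot p := AdjoinRoot.root p with hθ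
  set ev : Polynomial k →+* AdjoinRoot p :=
    eval₂RingHom ((algebraMap F (AdjoinRoot p)).comp (ι.comp (C : k →+* Polynomial k))) θ
    with hev
  have hbj : ∀ j : Fin r, b j = θ ^ (j : ℕ) := by
    intro j
    rw [hb, Module.Basis.reindex_apply, pb.basis_eq_pow]
    congr 1
  have hθr : θ ^ r = algebraMap F (AdjoinRoot p) (ι X) := by
    have h0 : Polynomial.aeval θ (X ^ r - C (ι X)) = 0 := by
      have hpeq : (X ^ r - C (ι X) : Polynomial F) = p := by
        rw [hp, Polynomial.map_sub, Polynomial.map_pow, map_X, map_C]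
      rw [hpeq, Polynomial.aeval_def, AdjoinRoot.algebraMap_eq, hθ]
      exact AdjoinRoot.eval₂_root p
    rw [map_sub, map_pow, aeval_X, aeval_C, sub_eq_zero] at h0
    exact h0
  have hX : (tMat k r).map ι = Algebra.leftMulMatrix b θ := by
    ext i j
    rw [Algebra.leftMulMatrix_eq_repr_mul, Matrix.map_apply, hbj j]
    have hmul : θ * θ ^ (j : ℕ) = θ ^ ((j : ℕ) + 1) := (pow_succ' θ (j : ℕ)).symm
    rcases lt_or_ge ((j : ℕ) + 1) r with hcase | hcase
    · have hpow : θ ^ ((j : ℕ) + 1) = b ⟨(j : ℕ) + 1, hcase⟩ := by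
        rw [hbj ⟨(j : ℕ) + 1, hcase⟩]
      rw [hmul, hpow, b.repr_self, Finsupp.single_apply]
      by_cases hij : (i : ℕ) = (j : ℕ) + 1
      · rw [if_pos (by rw [Fin.ext_iff]; exact hij.symm)]
        simp only [tMat, if_pos hij, _root_.map_one]
      · rw [if_neg (by rw [Fin.ext_iff]; intro h; exact hij h.symm)]
        have hcorner : ¬ ((i : ℕ) = 0 ∧ (j : ℕ) = r - 1) := by
          rintro ⟨-, h2⟩; omega
        simp only [tMat, if_neg hij, if_neg hcorner, _root_.map_zero]
    · have hj : (j : ℕ) + 1 = r := by have := j.isLt; omega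
      have hsm : algebraMap F (AdjoinRoot p) (ι X) = (ι X) • (1 : AdjoinRoot p) :=
        Algebra.algebraMap_eq_smul_one _
      have hone : (1 : AdjoinRoot p) = b ⟨0, hr⟩ := by
        rw [hbj ⟨0, hr⟩]; simp
      rw [hmul, hj, hθr, hsm, hone, _root_.map_smul, b.repr_self, Finsupp.smul_apply,
        Finsupp.single_apply]
      by_cases hi : (i : ℕ) = 0
      · rw [if_pos (by rw [Fin.ext_iff]; exact hi.symm)]
        have hcorner : ((i : ℕ) = 0 ∧ (j : ℕ) = r - 1) := ⟨hi, by omega⟩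
        have hsub : ¬ ((i : ℕ) = (j : ℕ) + 1) := by omega
        simp only [tMat, if_neg hsub, if_pos hcorner, smul_eq_mul, mul_one]
      · rw [if_neg (by rw [Fin.ext_iff]; intro h; exact hi h.symm)]
        have hsub : ¬ ((i : ℕ) = (j : ℕ) + 1) := by have := i.isLt; omega
        have hcorner : ¬ ((i : ℕ) = 0 ∧ (j : ℕ) = r - 1) := by rintro ⟨h1, -⟩; exact hi h1
        simp only [tMat, if_neg hsub, if_neg hcorner, map_zero, smul_eq_mul, mul_zero]
  have hkey : ∀ f : Polynomial k, (Polynomial.aeval (tMat k r) f).map ι = ρ (ev f) := by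
    have hhom : ((ι.mapMatrix).comp
        (Polynomial.aeval (tMat k r) :
          Polynomial k →ₐ[k] Matrix (Fin r) (Fin r) (Polynomial k)).toRingHom)
        = ρ.comp ev := by
      apply Polynomial.ringHom_ext
      · intro a
        ext i j
        simp only [RingHom.comp_apply, RingHom.mapMatrix_apply, AlgHom.toRingHom_eq_coe,
          RingHom.coe_coe, aeval_C, hev, coe_eval₂RingHom, eval₂_C, hρ]
        rw [AlgHom.commutes, Matrix.map_apply, Matrix.algebraMap_matrix_apply,
          Matrix.algebraMap_matrix_apply]
        split_ifs <;> simp [Polynomial.algebraMap_eq]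
      · simp only [RingHom.comp_apply, RingHom.mapMatrix_apply, AlgHom.toRingHom_eq_coe,
          RingHom.coe_coe, aeval_X, hev, coe_eval₂RingHom, eval₂_X, hρ]
        exact hX
    intro f
    have h2 := RingHom.congr_fun hhom f
    simpa using h2
  have hinj : Function.Injective ι := IsFractionRing.injective (Polynomial k) F
  apply hinj
  rw [RingHom.map_det, RingHom.map_det]
  have hmap : (restMat (r := r) B).map ι = blockHom ρ (B.map ev) := by
    ext pq₁ pq₂
    simp only [Matrix.map_apply, restMat, blockHom_apply]
    have h3 := congrFun (congrFun (hkey (B pq₁.1 pq₂.1)) pq₁.2) pq₂.2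
    simp only [Matrix.map_apply] at h3
    rw [h3]
  rw [RingHom.mapMatrix_apply, RingHom.mapMatrix_apply, hmap, det_blockHom,
    ← RingHom.mapMatrix_apply ev B, ← RingHom.map_det ev B, ← hkey B.det]

end Key

end StmtAux

/-- The order of the restricted-scalars module, i.e. the determinant of the
presentation matrix `restMat A` over `R[s]`, equals `(det A)⁽ʳ⁾` up to units
of `R[s^{±1}]`, where `(det A)⁽ʳ⁾` is computed from the roots of `det A` in
the algebraic closure of the fraction field of `R`. -/
theorem stmt_10 {R : Type*} [CommRing R] [IsDomain R] [IsNoetherianRing R]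
    [UniqueFactorizationMonoid R] (n r : ℕ) (hr : 0 < r)
    (A : Matrix (Fin n) (Fin n) (Polynomial R)) (hA : A.det ≠ 0) :
    ∃ (c : Rˣ) (i j : ℕ),
      (X : Polynomial (AlgebraicClosure (FractionRing R))) ^ i *
          Polynomial.C (algebraMap R (AlgebraicClosure (FractionRing R)) c) *
          ((restMat (r := r) A).det.map (algebraMap R (AlgebraicClosure (FractionRing R)))) =
        X ^ j * polyPowK r (A.det.map (algebraMap R (AlgebraicClosure (FractionRing R)))) := by
  classical
  set K : Type _ := AlgebraicClosure (FractionRing R) with hK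
  set φ : R →+* K := algebraMap R K with hφ
  set gK : Polynomial K := A.det.map φ with hgK
  set M : ℕ := (r + 1) * Multiset.card gK.roots with hM
  refine ⟨(-1 : Rˣ) ^ M, 0, 0, ?_⟩
  simp only [pow_zero, one_mul]
  have hc : (Polynomial.C (φ (((-1 : Rˣ) ^ M : Rˣ) : R)) : Polynomial K)
      = (-1 : Polynomial K) ^ M := by
    rw [Units.val_pow_eq_pow_val, Units.val_neg, Units.val_one, map_pow, map_neg,
      _root_.map_one, map_pow, map_neg, _root_.map_one]
  rw [hc]
  have h1 : Polynomial.map φ (restMat (r := r) A).det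
      = (restMat (r := r) (A.map (Polynomial.mapRingHom φ))).det := by
    rw [← StmtAux.restMat_map, ← RingHom.mapMatrix_apply, ← RingHom.map_det]
    rfl
  have h2 : (A.map (Polynomial.mapRingHom φ)).det = gK := by
    rw [hgK, ← RingHom.mapMatrix_apply, ← RingHom.map_det]
    rfl
  rw [h1, StmtAux.det_restMat hr, h2, StmtAux.det_aeval_tMat_eq hr, ← hM,
    ← mul_assoc, ← pow_add, Even.neg_one_pow ⟨M, rfl⟩, one_mul]
end

section
/- Let M be a finite (as a set) module over ℤ[s^{±1}]. Then the order Δ₀(M) of M is a unit (i.e., pseudonull modules have trivial order). -/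
open Matrix Polynomial LaurentPolynomial in

/-- Cauchy–Binet style divisibility: if Δ divides all maximal minors of F,
it divides det (F * V) for any V. -/
lemma dvd_det_mul {A : Type*} [CommRing A] {m n : ℕ} (F : Matrix (Fin n) (Fin m) A) (Δ : A)
    (h : ∀ e : Fin n ↪ Fin m, Δ ∣ (F.submatrix id ⇑e).det) (V : Matrix (Fin m) (Fin n) A) :
    Δ ∣ (F * V).det := by
  rw [← Matrix.det_transpose, Matrix.transpose_mul]
  have expand : (Vᵀ * Fᵀ).det
      = ∑ r : Fin n → Fin m, (∏ i, Vᵀ i (r i)) • Matrix.detRowAlternating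
          (fun i => Fᵀ (r i)) := by
    calc (Vᵀ * Fᵀ).det
        = (Matrix.detRowAlternating (R := A) (n := Fin n)).toMultilinearMap
            (fun i => ∑ k, Vᵀ i k • Fᵀ k) := by
          have harg : (fun i => (Vᵀ * Fᵀ) i) = (fun i => ∑ k, Vᵀ i k • Fᵀ k) := by
            funext i
            funext j
            simp [Matrix.mul_apply, Finset.sum_apply]
          exact congrArg (Matrix.detRowAlternating (R := A) (n := Fin n)).toMultilinearMap harg
      _ = ∑ r : Fin n → Fin m,
            (Matrix.detRowAlternating (R := A) (n := Fin n)).toMultilinearMap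
              (fun i => Vᵀ i (r i) • Fᵀ (r i)) :=
          MultilinearMap.map_sum _ _
      _ = ∑ r : Fin n → Fin m, (∏ i, Vᵀ i (r i)) • Matrix.detRowAlternating
            (fun i => Fᵀ (r i)) := by
          refine Finset.sum_congr rfl fun r _ => ?_
          exact MultilinearMap.map_smul_univ _ (fun i => Vᵀ i (r i)) (fun i => Fᵀ (r i))
  rw [expand]
  refine Finset.dvd_sum fun r _ => ?_
  by_cases hr : Function.Injective r
  · have hd : Matrix.detRowAlternating (fun i => Fᵀ (r i)) = (F.submatrix id r).det := by
      rw [← Matrix.det_transpose (F.submatrix id r)]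
      rfl
    rw [hd, smul_eq_mul]
    exact Dvd.dvd.mul_left (h ⟨r, hr⟩) _
  · have hd : Matrix.detRowAlternating (fun i => Fᵀ (r i)) = 0 := by
      rw [Function.not_injective_iff] at hr
      obtain ⟨i, j, hij, hne⟩ := hr
      exact Matrix.detRowAlternating.map_eq_zero_of_eq _ (by rw [hij]) hne
    rw [hd, smul_zero]
    exact dvd_zero _

open Matrix Polynomial LaurentPolynomial in
lemma dvd_pow_of_ann {A : Type*} [CommRing A] {m n : ℕ} (F : Matrix (Fin n) (Fin m) A) (Δ : A)
    (h : ∀ e : Fin n ↪ Fin m, Δ ∣ (F.submatrix id ⇑e).det) (a : A)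
    (ha : ∀ q : (Fin n → A) ⧸ LinearMap.range (Matrix.toLin' F), a • q = 0) :
    Δ ∣ a ^ n := by
  have hex : ∀ j : Fin n, ∃ w : Fin m → A,
      Matrix.toLin' F w = a • (Pi.single j 1 : Fin n → A) := by
    intro j
    have h0 : (Submodule.Quotient.mk (a • (Pi.single j 1 : Fin n → A)) :
        (Fin n → A) ⧸ LinearMap.range (Matrix.toLin' F)) = 0 := by
      rw [Submodule.Quotient.mk_smul]
      exact ha _
    rw [Submodule.Quotient.mk_eq_zero] at h0
    obtain ⟨w, hw⟩ := h0
    exact ⟨w, hw⟩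
  choose v hv using hex
  set V : Matrix (Fin m) (Fin n) A := Matrix.of fun k j => v j k with hV
  have hFV : F * V = a • (1 : Matrix (Fin n) (Fin n) A) := by
    ext i j
    have : (F * V) i j = (Matrix.toLin' F (v j)) i := by
      simp [Matrix.mul_apply, hV, Matrix.toLin'_apply, Matrix.mulVec, dotProduct]
    rw [this, hv j]
    by_cases hij : i = j
    · subst hij; simp
    · simp [Pi.single_apply, Matrix.one_apply, hij]
  have := dvd_det_mul F Δ h V
  rw [hFV] at this
  simpa [Matrix.det_smul] using this

open Matrix Polynomial LaurentPolynomial in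

lemma isUnit_of_dvd_const_and_cyclo (Δ : LaurentPolynomial ℤ) (c : ℤ) (hc : c ≠ 0)
    {k n : ℕ} (hk : k ≠ 0)
    (h1 : Δ ∣ (LaurentPolynomial.C c))
    (h2 : Δ ∣ (LaurentPolynomial.T 1 ^ k - 1) ^ n) : IsUnit Δ := by
  obtain ⟨q1, hq1⟩ := h1
  obtain ⟨q2, hq2⟩ := h2
  obtain ⟨a, f, hf⟩ := LaurentPolynomial.exists_T_pow Δ
  obtain ⟨b1, g1, hg1⟩ := LaurentPolynomial.exists_T_pow q1
  obtain ⟨b2, g2, hg2⟩ := LaurentPolynomial.exists_T_pow q2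
  have hΔ0 : Δ ≠ 0 := by
    rintro rfl
    rw [zero_mul, ← Polynomial.toLaurent_C, Polynomial.toLaurent_eq_zero] at hq1
    exact hc (by simpa using congrArg (fun p => Polynomial.coeff p 0) hq1)
  -- f * g1 = C c * X ^ (a + b1)
  have e1 : f * g1 = Polynomial.C c * Polynomial.X ^ (a + b1) := by
    apply Polynomial.toLaurent_injective
    rw [_root_.map_mul, hf, hg1, _root_.map_mul, Polynomial.toLaurent_C, Polynomial.toLaurent_X_pow]
    rw [Nat.cast_add, LaurentPolynomial.T_add]
    rw [hq1]
    ring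
  have e2 : f * g2 = (Polynomial.X ^ k - 1) ^ n * Polynomial.X ^ (a + b2) := by
    apply Polynomial.toLaurent_injective
    rw [_root_.map_mul, hf, hg2, _root_.map_mul, Polynomial.toLaurent_X_pow, map_pow, map_sub,
      Polynomial.toLaurent_X_pow, _root_.map_one]
    have hT : (LaurentPolynomial.T (k : ℤ) : LaurentPolynomial ℤ)
        = LaurentPolynomial.T 1 ^ k := by
      rw [LaurentPolynomial.T_pow, mul_one]
    rw [Nat.cast_add, LaurentPolynomial.T_add, hT, hq2]
    ring
  have hf0 : f ≠ 0 := by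
    rintro rfl
    rw [map_zero] at hf
    exact hΔ0 (by
      have := hf.symm
      rcases mul_eq_zero.mp this with h | h
      · exact h
      · exact absurd h (LaurentPolynomial.isUnit_T (a : ℤ)).ne_zero)
  have hg10 : g1 ≠ 0 := by
    rintro rfl
    rw [mul_zero] at e1
    have : Polynomial.C c * Polynomial.X ^ (a + b1) ≠ 0 := by
      apply mul_ne_zero
      · simpa using hc
      · exact pow_ne_zero _ Polynomial.X_ne_zero
    exact this e1.symm
  -- f is a monomial
  have hdeg : f.natDegree + g1.natDegree = a + b1 := by
    have := Polynomial.natDegree_mul hf0 hg10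
    rw [e1] at this
    rw [← this, Polynomial.natDegree_C_mul_X_pow _ _ hc]
  have htdeg : f.natTrailingDegree + g1.natTrailingDegree = a + b1 := by
    have := Polynomial.natTrailingDegree_mul hf0 hg10
    rw [e1] at this
    rw [← this]
    rw [Polynomial.natTrailingDegree_mul (by simpa using hc) (pow_ne_zero _ Polynomial.X_ne_zero)]
    simp [Polynomial.natTrailingDegree_X_pow]
  have hmono : f.natTrailingDegree = f.natDegree := by
    have h1' := Polynomial.natTrailingDegree_le_natDegree f
    have h2' := Polynomial.natTrailingDegree_le_natDegree g1
    omega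
  set d := f.natDegree with hd
  have hfeq : f = Polynomial.C (f.coeff d) * Polynomial.X ^ d := by
    ext i
    rcases lt_trichotomy i d with hlt | heq | hgt
    · rw [Polynomial.coeff_eq_zero_of_lt_natTrailingDegree (by omega)]
      simp [Polynomial.coeff_C_mul, Polynomial.coeff_X_pow, Nat.ne_of_lt hlt]
    · subst heq
      simp [Polynomial.coeff_C_mul, Polynomial.coeff_X_pow]
    · rw [Polynomial.coeff_eq_zero_of_natDegree_lt (by omega)]
      simp [Polynomial.coeff_C_mul, Polynomial.coeff_X_pow, (Nat.ne_of_lt hgt).symm]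
  -- the coefficient is a unit, via primitivity
  have hmonic : ((Polynomial.X ^ k - 1 : ℤ[X]) ^ n * Polynomial.X ^ (a + b2)).Monic := by
    have h1 : (Polynomial.X ^ k - 1 : ℤ[X]).Monic := by
      simpa using Polynomial.monic_X_pow_sub_C (1 : ℤ) hk
    exact (h1.pow n).mul (Polynomial.monic_X_pow _)
  have hprim := hmonic.isPrimitive
  have hunit : IsUnit (f.coeff d) := by
    apply hprim
    rw [← e2]
    exact dvd_mul_of_dvd_left ⟨Polynomial.X ^ d, hfeq⟩ g2
  -- conclude
  have hΔeq : Δ = Polynomial.toLaurent f * LaurentPolynomial.T (-(a : ℤ)) := by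
    rw [hf, mul_assoc, ← LaurentPolynomial.T_add]
    simp
  rw [hΔeq, hfeq]
  rw [_root_.map_mul, Polynomial.toLaurent_C, Polynomial.toLaurent_X_pow]
  exact ((hunit.map LaurentPolynomial.C).mul (LaurentPolynomial.isUnit_T _)).mul
    (LaurentPolynomial.isUnit_T _)


/-- `Δ` is the order (gcd of the maximal minors of a presentation matrix) of the
finitely generated module `M` over the commutative ring `A`. -/
def IsOrderOf {A : Type*} [CommRing A] (Δ : A)
    (M : Type*) [AddCommGroup M] [Module A M] : Prop :=
  ∃ (m n : ℕ) (F : Matrix (Fin n) (Fin m) A),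
    Nonempty (((Fin n → A) ⧸ LinearMap.range (Matrix.toLin' F)) ≃ₗ[A] M) ∧
    (∀ e : Fin n ↪ Fin m, Δ ∣ (F.submatrix id ⇑e).det) ∧
    (∀ d : A, (∀ e : Fin n ↪ Fin m, d ∣ (F.submatrix id ⇑e).det) → d ∣ Δ)

set_option synthInstance.maxHeartbeats 1000000 in
set_option maxHeartbeats 1000000 in
/-- A module over `ℤ[s^{±1}]` that is finite as a set (a pseudonull module)
has trivial order: its order `Δ₀(M)` is a unit. -/
theorem stmt_13 (M : Type*) [AddCommGroup M] [Module (LaurentPolynomial ℤ) M]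
    [Finite M] (Δ : LaurentPolynomial ℤ) (hΔ : IsOrderOf Δ M) :
    IsUnit Δ := by
  classical
  obtain ⟨m, n, F, ⟨eqv⟩, hmin, -⟩ := hΔ
  have key : ∀ a : LaurentPolynomial ℤ, (∀ x : M, a • x = 0) → Δ ∣ a ^ n := by
    intro a ha
    refine dvd_pow_of_ann F Δ hmin a fun q => ?_
    apply eqv.injective
    rw [LinearEquiv.map_smul, _root_.map_zero, ha]
  have := Fintype.ofFinite M
  set N : ℕ := Fintype.card M with hN
  have hann1 : ∀ x : M, (N : LaurentPolynomial ℤ) • x = 0 := by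
    intro x
    rw [Nat.cast_smul_eq_nsmul]
    exact card_nsmul_eq_zero
  have hfin : Finite (AddAut M) :=
    Finite.of_injective (fun (g : AddAut M) => (g : M → M)) DFunLike.coe_injective
  set u : (LaurentPolynomial ℤ)ˣ := (LaurentPolynomial.isUnit_T 1).unit with hu
  set φ : Multiplicative (AddAut M) := DistribMulAction.toAddAut (LaurentPolynomial ℤ)ˣ M u with hφ
  set k : ℕ := Nat.card (AddAut M) with hk
  have hkpos : k ≠ 0 := Nat.card_pos.ne'
  have hpow : φ ^ k = 1 := pow_card_eq_one'
  have hann2 : ∀ x : M, ((LaurentPolynomial.T 1 ^ k - 1 : LaurentPolynomial ℤ)) • x = 0 := by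
    intro x
    rw [sub_smul, one_smul, sub_eq_zero]
    have h1 : (LaurentPolynomial.T 1 : LaurentPolynomial ℤ) = (u : LaurentPolynomial ℤ) :=
      ((LaurentPolynomial.isUnit_T 1).unit_spec).symm
    rw [h1, ← Units.val_pow_eq_pow_val, ← Units.smul_def]
    have h2 : (u ^ k) • x = (Multiplicative.toAdd (φ ^ k)) x := by
      rw [hφ, ← map_pow]
      rfl
    rw [h2, hpow]
    rfl
  have hd1 : Δ ∣ (N : LaurentPolynomial ℤ) ^ n := key _ hann1
  have hd2 : Δ ∣ (LaurentPolynomial.T 1 ^ k - 1) ^ n := key _ hann2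
  have hc : ((N : ℤ) ^ n : ℤ) ≠ 0 := by
    have : N ≠ 0 := Fintype.card_ne_zero
    positivity
  refine isUnit_of_dvd_const_and_cyclo Δ ((N : ℤ) ^ n) hc hkpos ?_ hd2
  have hCN : (LaurentPolynomial.C ((N : ℤ) ^ n) : LaurentPolynomial ℤ)
      = (N : LaurentPolynomial ℤ) ^ n := by
    rw [map_pow, map_natCast (LaurentPolynomial.C (R := ℤ))]
  rw [hCN]
  exact hd1
end

section
/- Let φ be an automorphism of a finitely generated free group F of rank n and let φ* be the induced automorphism of the abelianization F^{ab} ≅ ℤⁿ, with matrix A ∈ GLₙ(ℤ). Then every eigenvalue λ of A satisfies |λ| ≤ GR(φ). -/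
open Filter
open scoped ENNReal

/-- Word length of `g` with respect to a generating set `S` (length of a
shortest word in the elements of `S` and their inverses representing `g`). -/
noncomputable def wordLength {H : Type*} [Group H] (S : Set H) (g : H) : ℕ :=
  sInf {k | ∃ w : List H, w.length = k ∧ (∀ x ∈ w, x ∈ S ∨ x⁻¹ ∈ S) ∧ w.prod = g}

/-- The growth rate `GR(φ) = max_{g ∈ S} limsup_k ‖φᵏ(g)‖^{1/k}` of an
endomorphism `φ` with respect to a finite generating set `S`. -/
noncomputable def growthRate {H : Type*} [Group H] (S : Finset H) (φ : H →* H) : ℝ≥0∞ :=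
  ⨆ g ∈ S, Filter.atTop.limsup
    (fun k : ℕ => ((wordLength (S : Set H) ((⇑φ)^[k] g) : ℝ≥0∞)) ^ (1 / (k : ℝ)))

/-- The abelianization map of the free group of rank `n`, written
multiplicatively, sending the `i`-th basis element to the `i`-th standard
basis vector of `ℤⁿ`. -/
noncomputable def abMap (n : ℕ) :
    FreeGroup (Fin n) →* Multiplicative (Fin n → ℤ) :=
  FreeGroup.lift (fun i => Multiplicative.ofAdd (Pi.single i 1))

/-! ### Auxiliary lemmas -/

def genS (n : ℕ) : Finset (FreeGroup (Fin n)) :=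
  Finset.univ.image (FreeGroup.of : Fin n → FreeGroup (Fin n))

lemma abMap_of (n : ℕ) (i : Fin n) :
    abMap n (FreeGroup.of i) = Multiplicative.ofAdd (Pi.single i 1) :=
  FreeGroup.lift_apply_of

lemma letter_bound (n : ℕ) (x : FreeGroup (Fin n))
    (hx : x ∈ (genS n : Set (FreeGroup (Fin n))) ∨ x⁻¹ ∈ (genS n : Set (FreeGroup (Fin n))))
    (i : Fin n) : |Multiplicative.toAdd (abMap n x) i| ≤ 1 := by
  have key : ∀ j : Fin n, |(Pi.single j 1 : Fin n → ℤ) i| ≤ 1 := by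
    intro j
    rcases eq_or_ne i j with h | h
    · simp [h, Pi.single_apply]
    · simp [Pi.single_apply, h.symm]
  rcases hx with hx | hx
  · simp only [genS, Finset.coe_image, Set.mem_image] at hx
    obtain ⟨j, -, rfl⟩ := hx
    rw [abMap_of]
    exact key j
  · simp only [genS, Finset.coe_image, Set.mem_image] at hx
    obtain ⟨j, -, hj⟩ := hx
    have hx2 : x = (FreeGroup.of j)⁻¹ := by rw [hj, inv_inv]
    subst hx2
    rw [map_inv, abMap_of]
    simpa using key j

lemma prod_bound (n : ℕ) (w : List (FreeGroup (Fin n)))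
    (hw : ∀ x ∈ w, x ∈ (genS n : Set (FreeGroup (Fin n))) ∨
      x⁻¹ ∈ (genS n : Set (FreeGroup (Fin n)))) (i : Fin n) :
    |Multiplicative.toAdd (abMap n w.prod) i| ≤ (w.length : ℤ) := by
  induction w with
  | nil => simp
  | cons a t ih =>
    rw [List.prod_cons, map_mul]
    have h1 : Multiplicative.toAdd (abMap n a * abMap n t.prod) i
        = Multiplicative.toAdd (abMap n a) i + Multiplicative.toAdd (abMap n t.prod) i := rfl
    rw [h1, List.length_cons]
    calc |Multiplicative.toAdd (abMap n a) i + Multiplicative.toAdd (abMap n t.prod) i|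
        ≤ |Multiplicative.toAdd (abMap n a) i| + |Multiplicative.toAdd (abMap n t.prod) i| :=
          abs_add_le _ _
      _ ≤ 1 + t.length := add_le_add
          (letter_bound n a (hw a List.mem_cons_self) i)
          (ih fun x hx => hw x (List.mem_cons_of_mem a hx))
      _ = ((t.length + 1 : ℕ) : ℤ) := by push_cast; ring

lemma exists_rep (n : ℕ) (g : FreeGroup (Fin n)) :
    ∃ w : List (FreeGroup (Fin n)),
      (∀ x ∈ w, x ∈ (genS n : Set (FreeGroup (Fin n))) ∨
        x⁻¹ ∈ (genS n : Set (FreeGroup (Fin n)))) ∧ w.prod = g := by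
  induction g using FreeGroup.induction_on with
  | C1 => exact ⟨[], by simp, by simp⟩
  | of i =>
    refine ⟨[FreeGroup.of i], ?_, by simp⟩
    intro x hx
    simp only [List.mem_singleton] at hx
    subst hx
    exact Or.inl (by simp [genS])
  | inv_of i _ =>
    refine ⟨[(FreeGroup.of i)⁻¹], ?_, by simp⟩
    intro x hx
    simp only [List.mem_singleton] at hx
    subst hx
    exact Or.inr (by simp [genS])
  | mul x y hx hy =>
    obtain ⟨wx, hwx, hpx⟩ := hx
    obtain ⟨wy, hwy, hpy⟩ := hy
    refine ⟨wx ++ wy, ?_, by simp [hpx, hpy]⟩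
    intro z hz
    rcases List.mem_append.mp hz with h | h
    · exact hwx z h
    · exact hwy z h

lemma abs_le_wordLength (n : ℕ) (g : FreeGroup (Fin n)) (i : Fin n) :
    |Multiplicative.toAdd (abMap n g) i|
      ≤ (wordLength (genS n : Set (FreeGroup (Fin n))) g : ℤ) := by
  have hne : {k | ∃ w : List (FreeGroup (Fin n)), w.length = k ∧
      (∀ x ∈ w, x ∈ (genS n : Set (FreeGroup (Fin n))) ∨
        x⁻¹ ∈ (genS n : Set (FreeGroup (Fin n)))) ∧ w.prod = g}.Nonempty := by
    obtain ⟨w, hw, hp⟩ := exists_rep n g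
    exact ⟨w.length, w, rfl, hw, hp⟩
  obtain ⟨w, hlen, hw, hp⟩ := Nat.sInf_mem hne
  rw [wordLength, ← hlen]
  rw [← hp]
  exact prod_bound n w hw i

lemma iterate_abMap (n : ℕ) (φ : FreeGroup (Fin n) ≃* FreeGroup (Fin n))
    (A : Matrix (Fin n) (Fin n) ℤ)
    (hA : ∀ x : FreeGroup (Fin n),
      Multiplicative.toAdd (abMap n (φ x)) = A.mulVec (Multiplicative.toAdd (abMap n x)))
    (k : ℕ) (x : FreeGroup (Fin n)) :
    Multiplicative.toAdd (abMap n ((⇑φ)^[k] x))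
      = (A ^ k).mulVec (Multiplicative.toAdd (abMap n x)) := by
  induction k with
  | zero => simp [Matrix.one_mulVec]
  | succ k ih =>
    rw [Function.iterate_succ_apply', hA, ih, Matrix.mulVec_mulVec, ← pow_succ']

lemma entry_eq (n : ℕ) (φ : FreeGroup (Fin n) ≃* FreeGroup (Fin n))
    (A : Matrix (Fin n) (Fin n) ℤ)
    (hA : ∀ x : FreeGroup (Fin n),
      Multiplicative.toAdd (abMap n (φ x)) = A.mulVec (Multiplicative.toAdd (abMap n x)))
    (k : ℕ) (i j : Fin n) :
    (A ^ k) i j = Multiplicative.toAdd (abMap n ((⇑φ)^[k] (FreeGroup.of j))) i := by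
  rw [iterate_abMap n φ A hA k]
  have h1 : Multiplicative.toAdd (abMap n (FreeGroup.of j)) = Pi.single j 1 := by
    rw [abMap]; rw [FreeGroup.lift_apply_of]; rfl
  rw [h1, Matrix.mulVec_single]
  simp

lemma exists_eigenvector (n : ℕ) (B : Matrix (Fin n) (Fin n) ℂ) (lam : ℂ)
    (hlam : (B.charpoly).IsRoot lam) :
    ∃ v : Fin n → ℂ, v ≠ 0 ∧ B.mulVec v = lam • v := by
  have hdet : (lam • (1 : Matrix (Fin n) (Fin n) ℂ) - B).det = 0 := by
    have h : (lam • (1 : Matrix (Fin n) (Fin n) ℂ) - B)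
        = (Matrix.charmatrix B).map (Polynomial.evalRingHom lam) := by
      ext i j
      rcases eq_or_ne i j with h | h
      · subst h; simp [Matrix.charmatrix_apply_eq]
      · simp [Matrix.charmatrix_apply_ne _ _ _ h, Matrix.one_apply_ne h]
    rw [h]
    have hd : (B.charmatrix.map ⇑(Polynomial.evalRingHom lam)).det
        = Polynomial.eval lam B.charpoly := by
      rw [Matrix.charpoly, ← Polynomial.coe_evalRingHom, ← RingHom.mapMatrix_apply,
        ← RingHom.map_det]
    rw [hd]; exact hlam
  obtain ⟨v, hv, hmul⟩ := (Matrix.exists_mulVec_eq_zero_iff).mpr hdet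
  refine ⟨v, hv, ?_⟩
  have h := hmul
  rw [Matrix.sub_mulVec, Matrix.smul_mulVec, Matrix.one_mulVec, sub_eq_zero] at h
  exact h.symm

lemma spectral_bound (n : ℕ) (B : Matrix (Fin n) (Fin n) ℂ) (lam : ℂ)
    (v : Fin n → ℂ) (hv : v ≠ 0) (hmul : B.mulVec v = lam • v) :
    ∃ i : Fin n, ∀ k : ℕ,
      ‖lam‖ ^ k ≤ ∑ j, ‖(B ^ k) i j‖ := by
  have hex : ∃ i, v i ≠ 0 := by
    by_contra h
    push_neg at h
    exact hv (funext fun i => h i)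
  have hne : (Finset.univ : Finset (Fin n)).Nonempty := by
    obtain ⟨i, _⟩ := hex; exact ⟨i, Finset.mem_univ i⟩
  obtain ⟨i, -, hi⟩ := Finset.exists_max_image Finset.univ (fun j => ‖v j‖) hne
  have hvi : 0 < ‖v i‖ := by
    obtain ⟨i₀, hi₀⟩ := hex
    have h1 := hi i₀ (Finset.mem_univ i₀)
    have h0 : 0 < ‖v i₀‖ := by simpa [norm_pos_iff] using hi₀
    linarith
  refine ⟨i, fun k => ?_⟩
  have hpow : (B ^ k).mulVec v = lam ^ k • v := by
    induction k with
    | zero => simp [Matrix.one_mulVec]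
    | succ k ih =>
      rw [pow_succ', ← Matrix.mulVec_mulVec, ih, Matrix.mulVec_smul, hmul, smul_smul]
      rw [mul_comm, ← pow_succ']
  have hentry : lam ^ k * v i = ∑ j, (B ^ k) i j * v j := by
    have h := congrFun hpow i
    rw [Matrix.mulVec, dotProduct] at h
    simpa [Pi.smul_apply, smul_eq_mul] using h.symm
  have hb : ‖lam ^ k * v i‖
      ≤ (∑ j, ‖(B ^ k) i j‖) * ‖v i‖ := by
    rw [hentry]
    calc ‖∑ j, (B ^ k) i j * v j‖
        ≤ ∑ j, ‖(B ^ k) i j * v j‖ := norm_sum_le _ _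
      _ ≤ ∑ j, ‖(B ^ k) i j‖ * ‖v i‖ := by
          refine Finset.sum_le_sum fun j _ => ?_
          rw [norm_mul]
          exact mul_le_mul_of_nonneg_left (hi j (Finset.mem_univ j)) (norm_nonneg _)
      _ = (∑ j, ‖(B ^ k) i j‖) * ‖v i‖ := by
          rw [← Finset.sum_mul]
  rw [norm_mul, norm_pow] at hb
  exact le_of_mul_le_mul_right hb hvi

lemma analytic (n : ℕ) (lam : ℝ) (L : Fin n → ℕ → ℕ) (G : ℝ≥0∞)
    (hG : ∀ j, Filter.atTop.limsup (fun k => ((L j k : ℝ≥0∞)) ^ (1/(k:ℝ))) ≤ G)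
    (hle : ∀ k, lam ^ k ≤ ∑ j, (L j k : ℝ)) (hlam0 : 0 ≤ lam) :
    ENNReal.ofReal lam ≤ G := by
  rcases eq_or_lt_of_le hlam0 with rfl | hlam
  · simp
  refine le_of_forall_gt_imp_ge_of_dense fun c hc => ?_
  rcases eq_or_ne c ⊤ with rfl | hct
  · exact le_top
  have hc0 : 0 < c := lt_of_le_of_lt (zero_le (a := G)) hc
  set cr := c.toReal with hcr
  have hcr0 : 0 < cr := ENNReal.toReal_pos hc0.ne' hct
  have hev : ∀ᶠ k in atTop, ∀ j, ((L j k : ℝ≥0∞)) ^ (1/(k:ℝ)) < c := by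
    rw [eventually_all]
    intro j
    exact Filter.eventually_lt_of_limsup_lt (lt_of_le_of_lt (hG j) hc)
  have hev2 : ∀ᶠ k in atTop, lam ^ k ≤ n * cr ^ k := by
    filter_upwards [hev, eventually_ge_atTop 1] with k hk hk1
    have hL : ∀ j, (L j k : ℝ) ≤ cr ^ k := by
      intro j
      have h1 : ((L j k : ℝ≥0∞)) ≤ c ^ k := by
        have h2 : (((L j k : ℝ≥0∞)) ^ (1/(k:ℝ))) ^ (k : ℝ) ≤ c ^ (k : ℝ) :=
          ENNReal.rpow_le_rpow (hk j).le (by positivity)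
        rwa [← ENNReal.rpow_mul, one_div, inv_mul_cancel₀ (by exact_mod_cast (by omega : k ≠ 0)),
          ENNReal.rpow_one, ENNReal.rpow_natCast] at h2
      have h3 : ((L j k : ℝ≥0∞)).toReal ≤ (c ^ k).toReal :=
        ENNReal.toReal_mono (by simp [ENNReal.pow_ne_top hct]) h1
      simpa [ENNReal.toReal_pow] using h3
    calc lam ^ k ≤ ∑ j, (L j k : ℝ) := hle k
      _ ≤ ∑ _j : Fin n, cr ^ k := Finset.sum_le_sum fun j _ => hL j
      _ = n * cr ^ k := by simp [Finset.sum_const, mul_comm]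
  have hfin : lam ≤ cr := by
    by_contra hcon
    push_neg at hcon
    have hr : 1 < lam / cr := (one_lt_div hcr0).mpr hcon
    have htend : Tendsto (fun k : ℕ => (lam / cr) ^ k) atTop atTop :=
      tendsto_pow_atTop_atTop_of_one_lt hr
    have hev3 : ∀ᶠ k in atTop, (n : ℝ) < (lam / cr) ^ k :=
      htend.eventually_gt_atTop n
    obtain ⟨k, h1, h2⟩ := (hev2.and hev3).exists
    have hlt : (n : ℝ) * cr ^ k < lam ^ k := by
      have h4 := (div_pow lam cr k) ▸ h2
      have hck : 0 < cr ^ k := by positivity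
      calc (n : ℝ) * cr ^ k < (lam ^ k / cr ^ k) * cr ^ k :=
            mul_lt_mul_of_pos_right h4 hck
        _ = lam ^ k := div_mul_cancel₀ _ hck.ne'
    linarith
  calc ENNReal.ofReal lam ≤ ENNReal.ofReal cr := ENNReal.ofReal_le_ofReal hfin
    _ = c := ENNReal.ofReal_toReal hct

/-- If `φ` is an automorphism of the free group of rank `n` inducing the matrix
`A ∈ GLₙ(ℤ)` on the abelianization `ℤⁿ`, then every (complex) eigenvalue `λ`
of `A` satisfies `|λ| ≤ GR(φ)`, the growth rate computed with respect to the
free basis. -/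
theorem stmt_16 (n : ℕ) (φ : FreeGroup (Fin n) ≃* FreeGroup (Fin n))
    (A : Matrix (Fin n) (Fin n) ℤ) (hGL : IsUnit A.det)
    (hA : ∀ x : FreeGroup (Fin n),
      Multiplicative.toAdd (abMap n (φ x)) = A.mulVec (Multiplicative.toAdd (abMap n x)))
    (lam : ℂ) (hlam : ((A.map (Int.cast : ℤ → ℂ)).charpoly).IsRoot lam) :
    ENNReal.ofReal ‖lam‖ ≤
      growthRate (Finset.univ.image (FreeGroup.of : Fin n → FreeGroup (Fin n)))
        φ.toMonoidHom := by
  set B : Matrix (Fin n) (Fin n) ℂ := A.map (Int.cast : ℤ → ℂ) with hB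
  obtain ⟨v, hv, hmul⟩ := exists_eigenvector n B lam hlam
  obtain ⟨i, hbound⟩ := spectral_bound n B lam v hv hmul
  -- B ^ k = (A ^ k).map cast
  have hBpow : ∀ k : ℕ, B ^ k = (A ^ k).map (Int.cast : ℤ → ℂ) := by
    intro k
    have h1 : B = (Int.castRingHom ℂ).mapMatrix A := rfl
    rw [h1, ← map_pow]
    rfl
  set L : Fin n → ℕ → ℕ := fun j k =>
    wordLength ((genS n : Finset (FreeGroup (Fin n))) : Set (FreeGroup (Fin n)))
      ((⇑φ.toMonoidHom)^[k] (FreeGroup.of j)) with hL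
  have hφ : (⇑φ.toMonoidHom : FreeGroup (Fin n) → FreeGroup (Fin n)) = ⇑φ := rfl
  have hle : ∀ k, ‖lam‖ ^ k ≤ ∑ j, (L j k : ℝ) := by
    intro k
    refine (hbound k).trans (Finset.sum_le_sum fun j _ => ?_)
    rw [hBpow k]
    have h1 : ((A ^ k).map (Int.cast : ℤ → ℂ)) i j = (((A ^ k) i j : ℤ) : ℂ) := rfl
    rw [h1, Complex.norm_intCast]
    have h2 : |(A ^ k) i j| ≤ (L j k : ℤ) := by
      rw [entry_eq n φ A hA k i j, hL]
      simp only [hφ]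
      exact abs_le_wordLength n ((⇑φ)^[k] (FreeGroup.of j)) i
    exact_mod_cast h2
  have hG : ∀ j, Filter.atTop.limsup (fun k => ((L j k : ℝ≥0∞)) ^ (1/(k:ℝ)))
      ≤ growthRate (genS n) φ.toMonoidHom := by
    intro j
    have hmem : FreeGroup.of j ∈ genS n := by simp [genS]
    exact le_biSup
      (fun g => Filter.atTop.limsup
        (fun k : ℕ => ((wordLength ((genS n : Finset _) : Set (FreeGroup (Fin n)))
          ((⇑φ.toMonoidHom)^[k] g) : ℝ≥0∞)) ^ (1 / (k : ℝ)))) hmem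
  exact analytic n ‖lam‖ L (growthRate (genS n) φ.toMonoidHom) hG hle
    (norm_nonneg _)
end
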